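/- arXiv:1710.05316 — 4 statements merged into one kernel-verified Lean document; each statement's English description precedes it below -/
import Mathlib

section
/- Let m = 2u+1 be odd and n ≥ 1. In the quotient ring H = ℤ[x_1,…,x_m]/R_{2n}, where R_{2n} is generated by x_i x_j for i≠j, by x_i^{2n} - x_j^{2n} for i≠j, and by x_j^{2n+1} for all j, the coefficient of x_1^{2n} in the element c = (1 - (x_1+⋯+x_m))^{2n+1} · ∏_{r=1}^{u} ((1+x_r)(1-x_r)^{-1})^2 equals m(2n-1)+2. (Here (1-x_r) is a unit in H since x_r is nilpotent, with inverse 1+x_r+x_r^2+⋯+x_r^{2n}.) -/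
open MvPolynomial

/-- The ideal `R_{2n}(x_1,…,x_m) ⊂ ℤ[x_1,…,x_m]` generated by `x_i x_j` (`i ≠ j`),
`x_i^{2n} - x_j^{2n}` (`i ≠ j`) and `x_j^{2n+1}`; the quotient models
`H^{even}(m # ℂP^{2n}; ℤ)`. -/
noncomputable def csIdeal (m n : ℕ) : Ideal (MvPolynomial (Fin m) ℤ) :=
  Ideal.span
    ({p | ∃ i j : Fin m, i ≠ j ∧ p = X i * X j} ∪
     {p | ∃ i j : Fin m, i ≠ j ∧ p = X i ^ (2 * n) - X j ^ (2 * n)} ∪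
     {p | ∃ j : Fin m, p = X j ^ (2 * n + 1)})

lemma aux_prod_one_add {ι A : Type*} [CommRing A] (t : Finset ι) (y : ι → A)
    (h : ∀ i ∈ t, ∀ j ∈ t, i ≠ j → y i * y j = 0) :
    ∏ i ∈ t, (1 + y i) = 1 + ∑ i ∈ t, y i := by
  classical
  induction t using Finset.induction_on with
  | empty => simp
  | @insert a t ha ih =>
    rw [Finset.prod_insert ha, Finset.sum_insert ha,
      ih (fun i hi j hj hij => h i (Finset.mem_insert_of_mem hi) j (Finset.mem_insert_of_mem hj) hij)]
    have hz : y a * ∑ i ∈ t, y i = 0 := by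
      rw [Finset.mul_sum]
      refine Finset.sum_eq_zero fun i hi => ?_
      exact h a (Finset.mem_insert_self a t) i (Finset.mem_insert_of_mem hi)
        (fun e => ha (e ▸ hi))
    ring_nf
    linear_combination hz
  
lemma coeff_one_sub_pow (N k : ℕ) :
    ((1 - Polynomial.X : Polynomial ℤ) ^ N).coeff k = (-1) ^ k * N.choose k := by
  have h1 : (1 - Polynomial.X : Polynomial ℤ) = -(Polynomial.X + Polynomial.C (-1)) := by
    simp; ring
  rw [h1, neg_pow, show ((-1 : Polynomial ℤ) ^ N) = Polynomial.C ((-1)^N) by simp,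
    Polynomial.coeff_C_mul, Polynomial.coeff_X_add_C_pow]
  by_cases hk : k ≤ N
  · have h2 : (-1:ℤ)^N = (-1)^(N-k) * (-1)^k := by rw [← pow_add, Nat.sub_add_cancel hk]
    have h3 : (-1:ℤ)^(N-k) * (-1)^(N-k) = 1 := by
      rw [← pow_add]; exact Even.neg_one_pow ⟨N-k, rfl⟩
    rw [h2]
    linear_combination ((-1:ℤ))^k * (N.choose k) * h3
  · rw [Nat.choose_eq_zero_of_lt (lt_of_not_ge hk)]; simp

set_option maxHeartbeats 1000000 in
/-- Let `m = 2u+1` be odd, `n ≥ 1`, and work in `H = ℤ[x_1,…,x_m]/R_{2n}`.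
The coefficient of `ω = x_1^{2n}` (in the basis `1`, `x_j^k` (`1 ≤ k ≤ 2n-1`), `ω`)
of `c = (1-(x_1+⋯+x_m))^{2n+1} ∏_{r=1}^{u} ((1+x_r)(1-x_r)^{-1})^2` equals
`m(2n-1)+2`; i.e. `c - (m(2n-1)+2)·ω` is a `ℤ`-linear combination of `1` and the
`x_j^k` with `1 ≤ k ≤ 2n-1`.  Here `(1-x_r)^{-1} = Σ_{k=0}^{2n} x_r^k`. -/
theorem stmt_3 (n u : ℕ) (hn : 1 ≤ n)
    (x : Fin (2 * u + 1) → (MvPolynomial (Fin (2 * u + 1)) ℤ ⧸ csIdeal (2 * u + 1) n))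
    (hx : ∀ j, x j = Ideal.Quotient.mk _ (X j)) :
    ((1 - ∑ j, x j) ^ (2 * n + 1) *
        ∏ r ∈ Finset.univ.filter (fun i : Fin (2 * u + 1) => (i : ℕ) < u),
          ((1 + x r) * ∑ k ∈ Finset.range (2 * n + 1), x r ^ k) ^ 2)
      - ((2 * (u : ℤ) + 1) * (2 * (n : ℤ) - 1) + 2) • (x 0) ^ (2 * n)
    ∈ Submodule.span ℤ
        (({1} ∪ {p | ∃ (j : Fin (2 * u + 1)) (k : ℕ), 1 ≤ k ∧ k ≤ 2 * n - 1 ∧ p = x j ^ k})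
          : Set (MvPolynomial (Fin (2 * u + 1)) ℤ ⧸ csIdeal (2 * u + 1) n)) := by
  classical
  set M : Submodule ℤ (MvPolynomial (Fin (2 * u + 1)) ℤ ⧸ csIdeal (2 * u + 1) n) :=
    Submodule.span ℤ
        (({1} ∪ {p | ∃ (j : Fin (2 * u + 1)) (k : ℕ), 1 ≤ k ∧ k ≤ 2 * n - 1 ∧ p = x j ^ k})
          : Set (MvPolynomial (Fin (2 * u + 1)) ℤ ⧸ csIdeal (2 * u + 1) n)) with hM
  -- basic relations
  have hxx : ∀ i j : Fin (2*u+1), i ≠ j → x i * x j = 0 := by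
    intro i j hij
    rw [hx, hx, ← map_mul, Ideal.Quotient.eq_zero_iff_mem]
    exact Ideal.subset_span (Or.inl (Or.inl ⟨i, j, hij, rfl⟩))
  have hpow2n : ∀ j : Fin (2*u+1), x j ^ (2*n) = x 0 ^ (2*n) := by
    intro j
    by_cases h0 : j = 0
    · rw [h0]
    · rw [hx, hx, ← map_pow, ← map_pow, Ideal.Quotient.mk_eq_mk_iff_sub_mem]
      exact Ideal.subset_span (Or.inl (Or.inr ⟨j, 0, h0, rfl⟩))
  have hnil : ∀ j : Fin (2*u+1), x j ^ (2*n+1) = 0 := by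
    intro j
    rw [hx, ← map_pow, Ideal.Quotient.eq_zero_iff_mem]
    exact Ideal.subset_span (Or.inr ⟨j, rfl⟩)
  have hx_high : ∀ (j : Fin (2*u+1)) (k : ℕ), 2*n+1 ≤ k → x j ^ k = 0 := by
    intro j k hk
    calc x j ^ k = x j ^ (2*n+1) * x j ^ (k - (2*n+1)) := by
          rw [← pow_add]; congr 1; omega
      _ = 0 := by rw [hnil]; ring
  have h1M : 1 ∈ M := Submodule.subset_span (Or.inl rfl)
  have hxkM : ∀ (j : Fin (2*u+1)) (k : ℕ), 1 ≤ k → k ≤ 2*n-1 → x j ^ k ∈ M := by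
    intro j k h1 h2
    exact Submodule.subset_span (Or.inr ⟨j, k, h1, h2, rfl⟩)
  -- key span lemma
  have key : ∀ (j : Fin (2*u+1)) (p : Polynomial ℤ),
      (Polynomial.aeval (x j)) p - p.coeff 0 • 1 - p.coeff (2*n) • (x 0 ^ (2*n)) ∈ M := by
    intro j p
    induction p using Polynomial.induction_on' with
    | add p q hp hq =>
      have := M.add_mem hp hq
      convert this using 1
      simp only [map_add, Polynomial.coeff_add, add_smul]
      ring
    | monomial k a =>
      rw [Polynomial.aeval_monomial, ← Algebra.smul_def]
      rcases Nat.lt_or_ge k (2*n) with hk | hk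
      · rcases Nat.eq_zero_or_pos k with rfl | hk1
        · have e0 : (Polynomial.monomial 0 a).coeff 0 = a := by
            rw [Polynomial.coeff_monomial]; exact if_pos rfl
          have e2 : (Polynomial.monomial 0 a).coeff (2*n) = 0 := by
            rw [Polynomial.coeff_monomial]; exact if_neg (by omega)
          rw [e0, e2, zero_smul, sub_zero, pow_zero, sub_self]
          exact M.zero_mem
        · have e0 : (Polynomial.monomial k a).coeff 0 = 0 := by
            rw [Polynomial.coeff_monomial]; exact if_neg (by omega)
          have e2 : (Polynomial.monomial k a).coeff (2*n) = 0 := by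
            rw [Polynomial.coeff_monomial]; exact if_neg (by omega)
          rw [e0, e2, zero_smul, zero_smul, sub_zero, sub_zero]
          exact M.smul_mem a (hxkM j k hk1 (by omega))
      · rcases eq_or_lt_of_le hk with heq | hgt
        · have e0 : (Polynomial.monomial k a).coeff 0 = 0 := by
            rw [Polynomial.coeff_monomial]; exact if_neg (by omega)
          have e2 : (Polynomial.monomial k a).coeff (2*n) = a := by
            rw [Polynomial.coeff_monomial]; exact if_pos heq.symm
          rw [e0, e2, zero_smul, sub_zero, ← heq, hpow2n j, sub_self]
          exact M.zero_mem
        · have e0 : (Polynomial.monomial k a).coeff 0 = 0 := by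
            rw [Polynomial.coeff_monomial]; exact if_neg (by omega)
          have e2 : (Polynomial.monomial k a).coeff (2*n) = 0 := by
            rw [Polynomial.coeff_monomial]; exact if_neg (by omega)
          rw [e0, e2, zero_smul, zero_smul, sub_zero, sub_zero, hx_high j k (by omega),
            smul_zero]
          exact M.zero_mem
  have key' : ∀ (j : Fin (2*u+1)) (p : Polynomial ℤ), p.coeff 0 = 0 →
      (Polynomial.aeval (x j)) p - p.coeff (2*n) • (x 0 ^ (2*n)) ∈ M := by
    intro j p hp0
    have := key j p
    rw [hp0] at this
    simpa using this
  -- products of aeval of zero-constant polys vanish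
  have haeval_mul : ∀ (i j : Fin (2*u+1)) (p q : Polynomial ℤ), i ≠ j →
      p.coeff 0 = 0 → q.coeff 0 = 0 →
      (Polynomial.aeval (x i)) p * (Polynomial.aeval (x j)) q = 0 := by
    intro i j p q hij hp hq
    have hp' : Polynomial.X * p.divX = p := by
      have := Polynomial.X_mul_divX_add p
      rwa [hp, map_zero, add_zero] at this
    have hq' : Polynomial.X * q.divX = q := by
      have := Polynomial.X_mul_divX_add q
      rwa [hq, map_zero, add_zero] at this
    rw [← hp', ← hq', map_mul, map_mul, Polynomial.aeval_X, Polynomial.aeval_X,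
      mul_mul_mul_comm, hxx i j hij, zero_mul]
  -- geometric series
  have hgeom : ∀ j : Fin (2*u+1), (1 - x j) * (∑ k ∈ Finset.range (2*n+1), x j ^ k) = 1 := by
    intro j
    have h := geom_sum_mul (x j) (2*n+1)
    rw [hnil j] at h
    linear_combination -h
  -- 1 - sum = product
  have hsum : 1 - ∑ j, x j = ∏ j, (1 - x j) := by
    have h := aux_prod_one_add (Finset.univ) (fun j : Fin (2*u+1) => -(x j))
      (by intro i _ j _ hij; have := hxx i j hij; linear_combination this)
    simp only [← sub_eq_add_neg] at h
    rw [h, Finset.sum_neg_distrib, ← sub_eq_add_neg]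
  -- the per-variable polynomials
  set q : Fin (2*u+1) → Polynomial ℤ := fun j =>
    if (j:ℕ) < u then (1+Polynomial.X)^2 * (1-Polynomial.X)^(2*n-1)
    else (1-Polynomial.X)^(2*n+1) with hqdef
  have hq1 : ∀ j : Fin (2*u+1), (q j).coeff 0 = 1 := by
    intro j
    by_cases h : (j:ℕ) < u <;>
      simp [hqdef, h, Polynomial.coeff_zero_eq_eval_zero]
  have hq0 : ∀ j : Fin (2*u+1), ((q j) - 1).coeff 0 = 0 := by
    intro j
    rw [Polynomial.coeff_sub, hq1 j, Polynomial.coeff_one, if_pos rfl, sub_self]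
  -- per-element identity on the filtered set
  have hper : ∀ r : Fin (2*u+1),
      (1 - x r)^(2*n+1) * ((1 + x r) * ∑ k ∈ Finset.range (2*n+1), x r ^ k)^2
        = (Polynomial.aeval (x r)) (((1+Polynomial.X)^2 * (1-Polynomial.X)^(2*n-1) : Polynomial ℤ)) := by
    intro r
    have hsplit : (1 - x r)^(2*n+1) = (1 - x r)^(2*n-1) * (1 - x r)^2 := by
      rw [← pow_add]; congr 1; omega
    have hg := hgeom r
    calc (1 - x r)^(2*n+1) * ((1 + x r) * ∑ k ∈ Finset.range (2*n+1), x r ^ k)^2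
        = (1 + x r)^2 * (1 - x r)^(2*n-1) *
            ((1 - x r) * ∑ k ∈ Finset.range (2*n+1), x r ^ k)^2 := by rw [hsplit]; ring
      _ = (1 + x r)^2 * (1 - x r)^(2*n-1) := by rw [hg]; ring
      _ = (Polynomial.aeval (x r)) (((1+Polynomial.X)^2 * (1-Polynomial.X)^(2*n-1) : Polynomial ℤ)) := by
          rw [map_mul, map_pow, map_pow, map_add, map_sub, map_one, Polynomial.aeval_X]
  -- the main product identity
  have hRsplit := Finset.prod_filter_mul_prod_filter_not (Finset.univ : Finset (Fin (2*u+1)))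
      (fun i => (i:ℕ) < u) (fun j => (1 - x j)^(2*n+1))
  have hmain : ((1 - ∑ j, x j) ^ (2*n+1) *
      ∏ r ∈ Finset.univ.filter (fun i : Fin (2*u+1) => (i:ℕ) < u),
        ((1 + x r) * ∑ k ∈ Finset.range (2*n+1), x r ^ k)^2)
      = ∏ j, (Polynomial.aeval (x j)) (q j) := by
    rw [hsum, ← Finset.prod_pow, ← hRsplit, mul_right_comm, ← Finset.prod_mul_distrib,
      ← Finset.prod_filter_mul_prod_filter_not (Finset.univ : Finset (Fin (2*u+1)))
        (fun i => (i:ℕ) < u) (fun j => (Polynomial.aeval (x j)) (q j))]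
    congr 1
    · refine Finset.prod_congr rfl (fun r hr => ?_)
      have hr' : (r:ℕ) < u := (Finset.mem_filter.mp hr).2
      rw [hper r, hqdef]
      simp only [hr', if_pos]
    · refine Finset.prod_congr rfl (fun r hr => ?_)
      have hr' : ¬ (r:ℕ) < u := by simpa using (Finset.mem_filter.mp hr).2
      rw [hqdef]
      simp only [hr', if_neg, if_false]
      rw [map_pow, map_sub, map_one, Polynomial.aeval_X]
  -- expand the product into a sum
  have hexp : ∏ j, (Polynomial.aeval (x j)) (q j)
      = 1 + ∑ j, (Polynomial.aeval (x j)) (q j - 1) := by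
    have h1 : ∀ j : Fin (2*u+1),
        (Polynomial.aeval (x j)) (q j) = 1 + (Polynomial.aeval (x j)) (q j - 1) := by
      intro j; rw [map_sub, map_one]; ring
    rw [Finset.prod_congr rfl (fun j _ => h1 j)]
    exact aux_prod_one_add _ _ (fun i _ j _ hij => haeval_mul i j _ _ hij (hq0 i) (hq0 j))
  -- coefficient computations
  have hc2 : ((1 - Polynomial.X : Polynomial ℤ)^(2*n+1)).coeff (2*n) = 2*(n:ℤ)+1 := by
    rw [coeff_one_sub_pow]
    have h1 : (2*n+1).choose (2*n) = 2*n+1 := by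
      have := Nat.choose_symm (n := 2*n+1) (k := 1) (by omega)
      simpa using this
    have h2 : (-1:ℤ)^(2*n) = 1 := Even.neg_one_pow ⟨n, by omega⟩
    rw [h1, h2, one_mul]
    push_cast; ring
  have hc1 : ((1+Polynomial.X)^2 * ((1-Polynomial.X : Polynomial ℤ)^(2*n-1))).coeff (2*n)
      = 2*(n:ℤ) - 3 := by
    have hx2 : ((1+Polynomial.X : Polynomial ℤ))^2 * ((1-Polynomial.X)^(2*n-1))
        = (1-Polynomial.X)^(2*n-1) + 2*(Polynomial.X * (1-Polynomial.X)^(2*n-1))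
          + Polynomial.X^2 * (1-Polynomial.X)^(2*n-1) := by ring
    rw [hx2, Polynomial.coeff_add, Polynomial.coeff_add]
    have t1 : ((1-Polynomial.X:Polynomial ℤ)^(2*n-1)).coeff (2*n) = 0 := by
      rw [coeff_one_sub_pow, Nat.choose_eq_zero_of_lt (by omega)]; simp
    have t2 : ((2:Polynomial ℤ)*(Polynomial.X * (1-Polynomial.X)^(2*n-1))).coeff (2*n) = -2 := by
      rw [show (2:Polynomial ℤ) = Polynomial.C 2 by norm_num, Polynomial.coeff_C_mul]
      have hXm := Polynomial.coeff_X_mul ((1-Polynomial.X:Polynomial ℤ)^(2*n-1)) (2*n-1)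
      rw [show (2*n-1)+1 = 2*n by omega] at hXm
      rw [hXm, coeff_one_sub_pow, Nat.choose_self]
      have hodd : Odd (2*n-1) := ⟨n-1, by omega⟩
      rw [hodd.neg_one_pow]; norm_num
    have t3 : ((Polynomial.X:Polynomial ℤ)^2 * (1-Polynomial.X)^(2*n-1)).coeff (2*n)
        = 2*(n:ℤ)-1 := by
      have hXm := Polynomial.coeff_X_pow_mul ((1-Polynomial.X:Polynomial ℤ)^(2*n-1)) 2 (2*n-2)
      rw [show (2*n-2)+2 = 2*n by omega] at hXm
      rw [hXm, coeff_one_sub_pow]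
      have heven : Even (2*n-2) := ⟨n-1, by omega⟩
      have hch : (2*n-1).choose (2*n-2) = 2*n-1 := by
        have := Nat.choose_symm (n := 2*n-1) (k := 1) (by omega)
        rw [show 2*n-1-1 = 2*n-2 by omega] at this
        simpa using this
      rw [heven.neg_one_pow, one_mul, hch]
      omega
    rw [t1, t2, t3]; ring
  have hqc : ∀ j : Fin (2*u+1), ((q j) - 1).coeff (2*n) = (q j).coeff (2*n) := by
    intro j
    rw [Polynomial.coeff_sub, Polynomial.coeff_one, if_neg (by omega), sub_zero]
  -- cardinality of the filter
  have hcard : (Finset.univ.filter (fun i : Fin (2*u+1) => (i:ℕ) < u)).card = u := by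
    have hset : (Finset.univ.filter (fun i : Fin (2*u+1) => (i:ℕ) < u)) =
        Finset.map ⟨Fin.castLE (by omega : u ≤ 2*u+1), Fin.castLE_injective _⟩ Finset.univ := by
      ext i
      simp only [Finset.mem_filter, Finset.mem_univ, true_and, Finset.mem_map,
        Function.Embedding.coeFn_mk]
      constructor
      · intro h; exact ⟨⟨i.1, h⟩, rfl⟩
      · rintro ⟨a, rfl⟩; exact a.2
    rw [hset, Finset.card_map, Finset.card_univ, Fintype.card_fin]
  have hcard' : (Finset.univ.filter (fun i : Fin (2*u+1) => ¬ (i:ℕ) < u)).card = u+1 := by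
    have h := Finset.card_filter_add_card_filter_not
      (s := (Finset.univ : Finset (Fin (2*u+1)))) (p := fun i : Fin (2*u+1) => (i:ℕ) < u)
    rw [Finset.card_univ, Fintype.card_fin, hcard] at h
    omega
  -- the total coefficient
  have hcoeffsum : ∑ j : Fin (2*u+1), ((q j) - 1).coeff (2*n)
      = (2*(u:ℤ)+1)*(2*(n:ℤ)-1)+2 := by
    have h1 : ∑ j : Fin (2*u+1), ((q j) - 1).coeff (2*n)
        = ∑ j : Fin (2*u+1), (q j).coeff (2*n) :=
      Finset.sum_congr rfl (fun j _ => hqc j)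
    rw [h1, ← Finset.sum_filter_add_sum_filter_not Finset.univ
      (fun i : Fin (2*u+1) => (i:ℕ) < u) (fun j => (q j).coeff (2*n))]
    have h2 : ∀ j ∈ Finset.univ.filter (fun i : Fin (2*u+1) => (i:ℕ) < u),
        (q j).coeff (2*n) = 2*(n:ℤ)-3 := by
      intro j hj
      have hj' : (j:ℕ) < u := (Finset.mem_filter.mp hj).2
      rw [hqdef]; simp only [hj', if_pos]; exact hc1
    have h3 : ∀ j ∈ Finset.univ.filter (fun i : Fin (2*u+1) => ¬ (i:ℕ) < u),
        (q j).coeff (2*n) = 2*(n:ℤ)+1 := by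
      intro j hj
      have hj' : ¬ (j:ℕ) < u := by simpa using (Finset.mem_filter.mp hj).2
      rw [hqdef]; simp only [hj', if_neg, if_false]; exact hc2
    rw [Finset.sum_congr rfl h2, Finset.sum_congr rfl h3, Finset.sum_const, Finset.sum_const,
      hcard, hcard', nsmul_eq_mul, nsmul_eq_mul]
    push_cast; ring
  -- final assembly
  rw [hmain, hexp, ← hcoeffsum]
  have hrw : (1 + ∑ j, (Polynomial.aeval (x j)) (q j - 1))
      - (∑ j : Fin (2*u+1), ((q j) - 1).coeff (2*n)) • (x 0)^(2*n)
      = (∑ j : Fin (2*u+1), ((Polynomial.aeval (x j)) (q j - 1)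
          - ((q j) - 1).coeff (2*n) • (x 0)^(2*n))) + 1 := by
    rw [Finset.sum_sub_distrib, Finset.sum_smul]
    abel
  rw [hrw]
  exact M.add_mem (Submodule.sum_mem M (fun j _ => key' j (q j - 1) (hq0 j))) h1M
end

section
/- In ℤ[x]/(x^{2n+1}), define w^k = (1+x)^k - (1+x)^{-k} for k ≥ 1 (well-defined since 1+x is a unit). Then for each k ≥ 0, (η-η̄)(η+η̄)^k = w^{k+1} + (a ℤ-linear combination of w^1,…,w^k), where η = x and η̄ = (1+x)^{-1} - 1. -/
open Polynomial

/-- In `ℤ[x]/(x^{2n+1})`, with `η` the image of `X`, `η̄ = (1+η)⁻¹ - 1`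
(i.e. `(1+η)(1+η̄) = 1`) and `w^k = (1+η)^k - (1+η)^{-k} = (1+η)^k - (1+η̄)^k`,
for each `0 ≤ k ≤ n-1` the element `(η-η̄)(η+η̄)^k` equals `w^{k+1}` plus a
`ℤ`-linear combination of `w^1, …, w^k`. -/
theorem stmt_9 (n : ℕ) (hn : 1 ≤ n)
    (η ηb : Polynomial ℤ ⧸ Ideal.span {(X : Polynomial ℤ) ^ (2 * n + 1)})
    (hη : η = Ideal.Quotient.mk _ X)
    (h : (1 + η) * (1 + ηb) = 1)
    (w : ℕ → Polynomial ℤ ⧸ Ideal.span {(X : Polynomial ℤ) ^ (2 * n + 1)})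
    (hw : ∀ k : ℕ, w k = (1 + η) ^ k - (1 + ηb) ^ k) :
    ∀ k : ℕ, k ≤ n - 1 → ∃ a : ℕ → ℤ,
      (η - ηb) * (η + ηb) ^ k = w (k + 1) + ∑ i ∈ Finset.Icc 1 k, a i • w i := by
  have hw0 : w 0 = 0 := by simp [hw]
  have hw1 : w 1 = η - ηb := by rw [hw]; ring
  have key : ∀ j : ℕ, (η + ηb) * w (j + 1) = w (j + 1 + 1) + w j - 2 * w (j + 1) := by
    intro j
    simp only [hw]
    linear_combination ((1 + η) ^ j - (1 + ηb) ^ j) * h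
  set S : ℕ → Submodule ℤ _ := fun k => Submodule.span ℤ (w '' Set.Icc 1 k) with hS
  have h2smul : ∀ x : Polynomial ℤ ⧸ Ideal.span {(X : Polynomial ℤ) ^ (2 * n + 1)}, 2 * x = (2 : ℤ) • x := by
    intro x; rw [zsmul_eq_mul]; norm_num
  have hwmem : ∀ i k : ℕ, i ≤ k → w i ∈ S k := by
    intro i k hik
    rcases Nat.eq_zero_or_pos i with rfl | hi
    · rw [hw0]; exact (S k).zero_mem
    · exact Submodule.subset_span ⟨i, ⟨hi, hik⟩, rfl⟩
  have hmul : ∀ (k : ℕ) x, x ∈ S k → (η + ηb) * x ∈ S (k + 1) := by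
    intro k x hx
    induction hx using Submodule.span_induction with
    | mem y hy =>
        obtain ⟨i, ⟨hi1, hik⟩, rfl⟩ := hy
        obtain ⟨j, rfl⟩ : ∃ j, i = j + 1 := ⟨i - 1, by omega⟩
        rw [key j]
        refine sub_mem (add_mem ?_ ?_) ?_
        · exact hwmem _ _ (by omega)
        · exact hwmem _ _ (by omega)
        · rw [h2smul]
          exact Submodule.smul_mem _ _ (hwmem _ _ (by omega))
    | zero => simpa using (S (k + 1)).zero_mem
    | add x y _ _ hx' hy' => simpa [mul_add] using add_mem hx' hy'
    | smul c x _ hx' => rw [mul_smul_comm]; exact (S (k + 1)).smul_mem c hx'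
  have main : ∀ k : ℕ, (η - ηb) * (η + ηb) ^ k - w (k + 1) ∈ S k := by
    intro k
    induction k with
    | zero =>
        have : (η - ηb) * (η + ηb) ^ 0 - w 1 = 0 := by rw [hw1]; ring
        rw [this]; exact (S 0).zero_mem
    | succ k ih =>
        have e : (η - ηb) * (η + ηb) ^ (k + 1) - w (k + 1 + 1) =
            (η + ηb) * ((η - ηb) * (η + ηb) ^ k - w (k + 1)) +
              (w k - 2 * w (k + 1)) := by
          linear_combination key k
        rw [e]
        refine add_mem (hmul k _ ih) (sub_mem ?_ ?_)
        · exact hwmem _ _ (by omega)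
        · rw [h2smul]
          exact Submodule.smul_mem _ _ (hwmem _ _ (by omega))
  intro k hk
  have hmem := main k
  rw [hS] at hmem
  rw [Finsupp.mem_span_image_iff_linearCombination] at hmem
  obtain ⟨l, hl, hsum⟩ := hmem
  refine ⟨fun i => l i, ?_⟩
  have hsum2 : ∑ i ∈ Finset.Icc 1 k, l i • w i =
      (η - ηb) * (η + ηb) ^ k - w (k + 1) := by
    rw [← hsum, Finsupp.linearCombination_apply, Finsupp.sum]
    refine (Finset.sum_subset ?_ ?_).symm
    · intro i hi
      have := (Finsupp.mem_supported ℤ l).mp hl hi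
      simp only [Set.mem_Icc] at this
      simp [Finset.mem_Icc, this]
    · intro i _ hnot
      rw [Finsupp.notMem_support_iff.mp hnot, zero_smul]
  rw [hsum2]; ring
end

section
/- Let n ≥ 1. The ring ℤ[x_1,…,x_m]/R_{2n}(x_1,…,x_m), with R_{2n} generated by x_i x_j (i≠j), x_i^{2n}-x_j^{2n} (i≠j), x_j^{2n+1}, is a free ℤ-module of rank m(2n-1)+2, with basis {1} ∪ {x_j^k : 1≤j≤m, 1≤k≤2n-1} ∪ {ω} where ω is the common image of the x_j^{2n}. -/
open MvPolynomial

namespace Stmt14Aux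

variable (m n : ℕ)

/-- Index type of the basis. -/
abbrev Idx := Unit ⊕ (Fin m × Fin (2 * n - 1)) ⊕ Unit

/-- Value of the coefficient-extraction map on a single-variable monomial `x_j^k`. -/
noncomputable def g (j : Fin m) (k : ℕ) : Idx m n →₀ ℤ :=
  if h : 1 ≤ k ∧ k ≤ 2 * n - 1 then
    Finsupp.single (Sum.inr (Sum.inl (j, ⟨k - 1, by omega⟩))) 1
  else if k = 2 * n then Finsupp.single (Sum.inr (Sum.inr ())) 1
  else 0

/-- Value of the coefficient-extraction map on a general monomial. -/
noncomputable def v (μ : Fin m →₀ ℕ) : Idx m n →₀ ℤ :=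
  if μ = 0 then Finsupp.single (Sum.inl ()) 1
  else if μ.support.card = 1 then ∑ j ∈ μ.support, g m n j (μ j)
  else 0

/-- The `ℤ`-linear coefficient-extraction map. -/
noncomputable def ψ : MvPolynomial (Fin m) ℤ →ₗ[ℤ] (Idx m n →₀ ℤ) :=
  (MvPolynomial.basisMonomials (Fin m) ℤ).constr ℤ (v m n)

lemma psi_monomial (μ : Fin m →₀ ℕ) (c : ℤ) :
    ψ m n (monomial μ c) = c • v m n μ := by
  have h1 : (monomial μ c : MvPolynomial (Fin m) ℤ)
      = c • (MvPolynomial.basisMonomials (Fin m) ℤ) μ := by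
    rw [coe_basisMonomials]
    simp [MvPolynomial.smul_monomial]
  rw [h1, map_smul, ψ, Module.Basis.constr_basis]

lemma v_zero : v m n 0 = Finsupp.single (Sum.inl ()) 1 := by simp [v]

lemma v_single {j : Fin m} {k : ℕ} (hk : k ≠ 0) :
    v m n (Finsupp.single j k) = g m n j k := by
  have h0 : Finsupp.single j k ≠ 0 := by
    simp [Finsupp.single_eq_zero, hk]
  have hs : (Finsupp.single j k).support = {j} := Finsupp.support_single_ne_zero _ hk
  rw [v, if_neg h0, hs]
  simp

lemma v_two {μ : Fin m →₀ ℕ} {i j : Fin m} (hi : μ i ≠ 0) (hj : μ j ≠ 0)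
    (hij : i ≠ j) : v m n μ = 0 := by
  have h0 : μ ≠ 0 := by
    intro h; apply hi; rw [h]; rfl
  have hsub : ({i, j} : Finset (Fin m)) ⊆ μ.support := by
    intro t ht
    simp only [Finset.mem_insert, Finset.mem_singleton] at ht
    rcases ht with rfl | rfl <;> simpa [Finsupp.mem_support_iff]
  have hcard : 2 ≤ μ.support.card := by
    calc 2 = ({i, j} : Finset (Fin m)).card := by rw [Finset.card_pair hij]
    _ ≤ μ.support.card := Finset.card_le_card hsub
  rw [v, if_neg h0, if_neg (by omega)]

lemma g_large {j : Fin m} {k : ℕ} (hk : 2 * n + 1 ≤ k) : g m n j k = 0 := by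
  rw [g, dif_neg (by omega), if_neg (by omega)]

lemma g_omega (hn : 1 ≤ n) (j : Fin m) :
    g m n j (2 * n) = Finsupp.single (Sum.inr (Sum.inr ())) 1 := by
  rw [g, dif_neg (by omega), if_pos rfl]

lemma g_mid {j : Fin m} {k : ℕ} (h1 : 1 ≤ k) (h2 : k ≤ 2 * n - 1) :
    g m n j k = Finsupp.single (Sum.inr (Sum.inl (j, ⟨k - 1, by omega⟩))) 1 := by
  rw [g, dif_pos ⟨h1, h2⟩]

/-- If `μ` is not supported on a single variable `i`, it is a single-variable monomial. -/
lemma single_or_two (μ : Fin m →₀ ℕ) (i : Fin m) :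
    μ = Finsupp.single i (μ i) ∨ ∃ t, t ≠ i ∧ μ t ≠ 0 := by
  by_cases h : ∃ t, t ≠ i ∧ μ t ≠ 0
  · exact Or.inr h
  · push_neg at h
    left
    ext t
    rcases eq_or_ne t i with rfl | ht
    · simp
    · rw [Finsupp.single_apply, if_neg (Ne.symm ht), h t ht]

lemma v_add_two_n (hn : 1 ≤ n) (μ : Fin m →₀ ℕ) (hμ : μ ≠ 0) (i : Fin m) :
    v m n (μ + Finsupp.single i (2 * n)) = 0 := by
  rcases single_or_two _ μ i with hs | ⟨t, hti, ht⟩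
  · have hμi : μ i ≠ 0 := by
      intro h; apply hμ; rw [hs, h, Finsupp.single_zero]
    rw [hs, ← Finsupp.single_add]
    rw [v_single m n (by omega), g_large m n (by omega)]
  · have h1 : (μ + Finsupp.single i (2 * n)) t ≠ 0 := by
      simp [Finsupp.single_apply, if_neg (Ne.symm hti), ht]
    have h2 : (μ + Finsupp.single i (2 * n) : Fin m →₀ ℕ) i ≠ 0 := by
      simp; omega
    exact v_two m n h1 h2 hti

lemma psi_vanish (hn : 1 ≤ n) {p : MvPolynomial (Fin m) ℤ} (hp : p ∈ csIdeal m n) :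
    ψ m n p = 0 := by
  have key : ∀ p ∈ csIdeal m n, ∀ q : MvPolynomial (Fin m) ℤ, ψ m n (q * p) = 0 := by
    intro p hp
    rw [csIdeal] at hp
    refine Submodule.span_induction ?_ ?_ ?_ ?_ hp
    · rintro y ((hy | hy) | hy) q
      · -- x_i x_j
        obtain ⟨i, j, hij, rfl⟩ := hy
        induction q using MvPolynomial.induction_on' with
        | add p q hp hq => rw [add_mul, map_add, hp, hq, add_zero]
        | monomial μ c =>
          have : (monomial μ c : MvPolynomial (Fin m) ℤ) * (X i * X j)
              = monomial (μ + Finsupp.single i 1 + Finsupp.single j 1) c := by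
            rw [X, X, monomial_mul, monomial_mul, ← add_assoc]; ring_nf
          rw [this, psi_monomial]
          have hi' : (μ + Finsupp.single i 1 + Finsupp.single j 1 : Fin m →₀ ℕ) i ≠ 0 := by
            simp
          have hj' : (μ + Finsupp.single i 1 + Finsupp.single j 1 : Fin m →₀ ℕ) j ≠ 0 := by
            simp
          rw [v_two m n hi' hj' hij, smul_zero]
      · -- x_i^{2n} - x_j^{2n}
        obtain ⟨i, j, hij, rfl⟩ := hy
        induction q using MvPolynomial.induction_on' with
        | add p q hp hq => rw [add_mul, map_add, hp, hq, add_zero]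
        | monomial μ c =>
          have h1 : (monomial μ c : MvPolynomial (Fin m) ℤ)
              * (X i ^ (2 * n) - X j ^ (2 * n))
              = monomial (μ + Finsupp.single i (2 * n)) c
                - monomial (μ + Finsupp.single j (2 * n)) c := by
            simp [mul_sub, X_pow_eq_monomial, monomial_mul]
          rw [h1, map_sub, psi_monomial, psi_monomial]
          rcases eq_or_ne μ 0 with rfl | hμ
          · rw [zero_add, zero_add, v_single m n (by omega),
              v_single m n (by omega), g_omega m n hn, g_omega m n hn, sub_self]
          · rw [v_add_two_n m n hn μ hμ i, v_add_two_n m n hn μ hμ j,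
              smul_zero, sub_zero]
      · -- x_j^{2n+1}
        obtain ⟨i, rfl⟩ := hy
        induction q using MvPolynomial.induction_on' with
        | add p q hp hq => rw [add_mul, map_add, hp, hq, add_zero]
        | monomial μ c =>
          have h1 : (monomial μ c : MvPolynomial (Fin m) ℤ) * X i ^ (2 * n + 1)
              = monomial (μ + Finsupp.single i (2 * n + 1)) c := by
            simp [X_pow_eq_monomial, monomial_mul]
          rw [h1, psi_monomial]
          rcases single_or_two _ μ i with hs | ⟨t, hti, ht⟩
          · rw [hs, ← Finsupp.single_add, v_single m n (by omega),
              g_large m n (by omega), smul_zero]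
          · have h2 : (μ + Finsupp.single i (2 * n + 1)) t ≠ 0 := by
              simp [Finsupp.single_apply, if_neg (Ne.symm hti), ht]
            have h3 : (μ + Finsupp.single i (2 * n + 1) : Fin m →₀ ℕ) i ≠ 0 := by
              simp
            rw [v_two m n h2 h3 hti, smul_zero]
    · intro q; rw [mul_zero, map_zero]
    · intro a b _ _ ha hb q; rw [mul_add, map_add, ha, hb, add_zero]
    · intro a y _ hy q
      rw [smul_eq_mul, ← mul_assoc, hy]
  have := key p hp 1
  rwa [one_mul] at this

/-- Polynomial representatives of the basis elements. -/
noncomputable def rep (hm : 1 ≤ m) : Idx m n → MvPolynomial (Fin m) ℤ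
  | Sum.inl _ => 1
  | Sum.inr (Sum.inl (j, k)) => X j ^ ((k : ℕ) + 1)
  | Sum.inr (Sum.inr _) => X (⟨0, hm⟩ : Fin m) ^ (2 * n)

lemma psi_rep (hm : 1 ≤ m) (hn : 1 ≤ n) (i : Idx m n) :
    ψ m n (rep m n hm i) = Finsupp.single i 1 := by
  rcases i with ⟨⟩ | ⟨j, k⟩ | ⟨⟩
  · have h : rep m n hm (Sum.inl ()) = monomial 0 1 := by
      simp [rep, monomial_zero']
    rw [h, psi_monomial, v_zero, one_smul]
  · have h : rep m n hm (Sum.inr (Sum.inl (j, k)))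
        = monomial (Finsupp.single j ((k : ℕ) + 1)) 1 := by
      simp [rep, X_pow_eq_monomial]
    have hk : (k : ℕ) < 2 * n - 1 := k.isLt
    rw [h, psi_monomial, v_single m n (by omega), g_mid m n (by omega) (by omega),
      one_smul]
    congr 1
  · have h : rep m n hm (Sum.inr (Sum.inr ()))
        = monomial (Finsupp.single (⟨0, hm⟩ : Fin m) (2 * n)) 1 := by
      simp [rep, X_pow_eq_monomial]
    rw [h, psi_monomial, v_single m n (by omega), g_omega m n hn, one_smul]

lemma memI_XX {i j : Fin m} (hij : i ≠ j) : X i * X j ∈ csIdeal m n :=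
  Ideal.subset_span (Or.inl (Or.inl ⟨i, j, hij, rfl⟩))

lemma memI_diff {i j : Fin m} (hij : i ≠ j) :
    X i ^ (2 * n) - X j ^ (2 * n) ∈ csIdeal m n :=
  Ideal.subset_span (Or.inl (Or.inr ⟨i, j, hij, rfl⟩))

lemma memI_pow (j : Fin m) : X j ^ (2 * n + 1) ∈ csIdeal m n :=
  Ideal.subset_span (Or.inr ⟨j, rfl⟩)

lemma mk_monomial_mem (hm : 1 ≤ m) (hn : 1 ≤ n) (μ : Fin m →₀ ℕ) (c : ℤ) :
    Ideal.Quotient.mk (csIdeal m n) (monomial μ c) ∈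
      Submodule.span ℤ
        (Set.range fun i => Ideal.Quotient.mk (csIdeal m n) (rep m n hm i)) := by
  have hsm : (monomial μ c : MvPolynomial (Fin m) ℤ) = c • monomial μ 1 := by
    simp [MvPolynomial.smul_monomial]
  rw [hsm, map_zsmul]
  refine Submodule.smul_mem _ _ ?_
  rcases eq_or_ne μ 0 with rfl | hμ
  · refine Submodule.subset_span ⟨Sum.inl (), ?_⟩
    simp [rep, monomial_zero']
  · obtain ⟨j, hj⟩ := Finsupp.support_nonempty_iff.mpr hμ
    have hμj : μ j ≠ 0 := Finsupp.mem_support_iff.mp hj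
    rcases single_or_two _ μ j with hs | ⟨t, htj, ht⟩
    · -- single variable monomial `x_j^k`
      set k := μ j with hk
      have hXk : (monomial μ 1 : MvPolynomial (Fin m) ℤ) = X j ^ k := by
        rw [hs, X_pow_eq_monomial]
      rcases lt_or_ge k (2 * n) with hlt | hge
      · -- 1 ≤ k ≤ 2n - 1 : a basis element
        refine Submodule.subset_span ⟨Sum.inr (Sum.inl (j, ⟨k - 1, by omega⟩)), ?_⟩
        show Ideal.Quotient.mk _ (X j ^ (k - 1 + 1)) = _
        rw [show k - 1 + 1 = k from by omega, hXk]
      · rcases eq_or_lt_of_le hge with heq | hgt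
        · -- k = 2n : equal to ω in the quotient
          rcases eq_or_ne j (⟨0, hm⟩ : Fin m) with rfl | hne
          · refine Submodule.subset_span ⟨Sum.inr (Sum.inr ()), ?_⟩
            show Ideal.Quotient.mk _ (X (⟨0, hm⟩ : Fin m) ^ (2 * n)) = _
            rw [hXk, ← heq]
          · refine Submodule.subset_span ⟨Sum.inr (Sum.inr ()), ?_⟩
            show Ideal.Quotient.mk _ (X (⟨0, hm⟩ : Fin m) ^ (2 * n)) = _
            rw [hXk, ← heq]
            exact (Ideal.Quotient.eq).mpr (memI_diff m n (Ne.symm hne))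
        · -- k ≥ 2n + 1 : zero in the quotient
          have hfac : (monomial μ 1 : MvPolynomial (Fin m) ℤ)
              = X j ^ (2 * n + 1) * X j ^ (k - (2 * n + 1)) := by
            rw [hXk, ← pow_add]
            congr 1
            omega
          have : (monomial μ 1 : MvPolynomial (Fin m) ℤ) ∈ csIdeal m n := by
            rw [hfac]
            exact Ideal.mul_mem_right _ _ (memI_pow m n j)
          rw [Ideal.Quotient.eq_zero_iff_mem.mpr this]
          exact Submodule.zero_mem _
    · -- at least two variables : zero in the quotient
      have hμt : μ t ≠ 0 := ht
      have hle : Finsupp.single t 1 + Finsupp.single j 1 ≤ μ := by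
        rw [Finsupp.le_def]
        intro a
        simp only [Finsupp.add_apply, Finsupp.single_apply]
        rcases eq_or_ne a t with rfl | hat
        · rw [if_pos rfl, if_neg (by exact fun h => htj h.symm)]
          omega
        · rcases eq_or_ne a j with rfl | haj
          · rw [if_neg (Ne.symm hat), if_pos rfl]
            omega
          · rw [if_neg (Ne.symm hat), if_neg (Ne.symm haj)]
            omega
      have hfac : (monomial μ 1 : MvPolynomial (Fin m) ℤ)
          = (X t * X j) * monomial (μ - (Finsupp.single t 1 + Finsupp.single j 1)) 1 := by
        rw [X, X, monomial_mul, monomial_mul, add_tsub_cancel_of_le hle]; norm_num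
      have : (monomial μ 1 : MvPolynomial (Fin m) ℤ) ∈ csIdeal m n := by
        rw [hfac]
        exact Ideal.mul_mem_right _ _ (memI_XX m n htj)
      rw [Ideal.Quotient.eq_zero_iff_mem.mpr this]
      exact Submodule.zero_mem _

lemma span_top (hm : 1 ≤ m) (hn : 1 ≤ n) :
    ⊤ ≤ Submodule.span ℤ
        (Set.range fun i => Ideal.Quotient.mk (csIdeal m n) (rep m n hm i)) := by
  rintro y -
  obtain ⟨p, rfl⟩ := Ideal.Quotient.mk_surjective y
  induction p using MvPolynomial.induction_on' with
  | monomial μ c => exact mk_monomial_mem m n hm hn μ c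
  | add p q hp hq => rw [map_add]; exact Submodule.add_mem _ hp hq

lemma indep (hm : 1 ≤ m) (hn : 1 ≤ n) :
    LinearIndependent ℤ
      (fun i => Ideal.Quotient.mk (csIdeal m n) (rep m n hm i)) := by
  rw [linearIndependent_iff]
  intro l hl
  set mkL := (Ideal.Quotient.mkₐ ℤ (csIdeal m n)).toLinearMap with hmkL
  have h0 : mkL (Finsupp.linearCombination ℤ (rep m n hm) l) = 0 := by
    rw [Finsupp.apply_linearCombination]
    exact hl
  have hmem : Finsupp.linearCombination ℤ (rep m n hm) l ∈ csIdeal m n :=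
    Ideal.Quotient.eq_zero_iff_mem.mp h0
  have hψ : ψ m n (Finsupp.linearCombination ℤ (rep m n hm) l) = 0 :=
    psi_vanish m n hn hmem
  rw [Finsupp.apply_linearCombination] at hψ
  have hco : (⇑(ψ m n) ∘ rep m n hm) = fun i => Finsupp.single i (1 : ℤ) :=
    funext fun i => psi_rep m n hm hn i
  rw [hco] at hψ
  have := linearIndependent_iff.mp
    (Finsupp.basisSingleOne (R := ℤ) (ι := Idx m n)).linearIndependent l
  apply this
  rwa [Finsupp.coe_basisSingleOne]

end Stmt14Aux

/-- `ℤ[x_1,…,x_m]/R_{2n}` is a free `ℤ`-module of rank `m(2n-1)+2`, with basis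
`{1} ∪ {x_j^k : 1 ≤ j ≤ m, 1 ≤ k ≤ 2n-1} ∪ {ω}`, where `ω` is the common image of
the `x_j^{2n}`. -/
theorem stmt_14 (m n : ℕ) (hm : 1 ≤ m) (hn : 1 ≤ n)
    (x : Fin m → (MvPolynomial (Fin m) ℤ ⧸ csIdeal m n))
    (hx : ∀ j, x j = Ideal.Quotient.mk _ (X j)) :
    ∃ B : Module.Basis (Unit ⊕ (Fin m × Fin (2 * n - 1)) ⊕ Unit) ℤ
        (MvPolynomial (Fin m) ℤ ⧸ csIdeal m n),
      B (Sum.inl ()) = 1 ∧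
      (∀ (j : Fin m) (k : Fin (2 * n - 1)),
        B (Sum.inr (Sum.inl (j, k))) = x j ^ ((k : ℕ) + 1)) ∧
      (∀ j : Fin m, B (Sum.inr (Sum.inr ())) = x j ^ (2 * n)) := by
  classical
  have hli := Stmt14Aux.indep m n hm hn
  have hsp := Stmt14Aux.span_top m n hm hn
  refine ⟨Module.Basis.mk hli hsp, ?_, ?_, ?_⟩
  · rw [Module.Basis.mk_apply]
    show Ideal.Quotient.mk _ (1 : MvPolynomial (Fin m) ℤ) = 1
    rw [map_one]
  · intro j k
    rw [Module.Basis.mk_apply, hx j]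
    show Ideal.Quotient.mk _ (X j ^ ((k : ℕ) + 1)) = _
    rw [map_pow]
  · intro j
    rw [Module.Basis.mk_apply, hx j, ← map_pow]
    show Ideal.Quotient.mk _ (X (⟨0, hm⟩ : Fin m) ^ (2 * n)) = _
    rcases eq_or_ne (⟨0, hm⟩ : Fin m) j with rfl | hne
    · rfl
    · exact (Ideal.Quotient.eq).mpr (Stmt14Aux.memI_diff m n hne)
end

section
/- Let m = 2u+1, n ≥ 1, and H = ℤ[x_1,…,x_m]/R_{2n}. The element c = ∏_{r=1}^u (1-x_r)^{2n-1}(1+x_r)^2 · ∏_{s=u+1}^{m}(1-x_s)^{2n+1} ∈ H equals (1-(x_1+⋯+x_m))^{2n+1} · ∏_{r=1}^u ((1+x_r)/(1-x_r))^2, where (1-x_r)^{-1} = Σ_{k=0}^{2n} x_r^k. -/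
open MvPolynomial

lemma prod_one_sub_eq {ι R : Type*} [CommRing R] (s : Finset ι) (x : ι → R)
    (h : ∀ i ∈ s, ∀ j ∈ s, i ≠ j → x i * x j = 0) :
    ∏ j ∈ s, (1 - x j) = 1 - ∑ j ∈ s, x j := by
  classical
  induction s using Finset.cons_induction with
  | empty => simp
  | cons a s ha ih =>
    rw [Finset.prod_cons, Finset.sum_cons,
      ih (fun i hi j hj hij => h i (Finset.mem_cons_of_mem hi)
        j (Finset.mem_cons_of_mem hj) hij)]
    have : x a * ∑ j ∈ s, x j = 0 := by
      rw [Finset.mul_sum]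
      refine Finset.sum_eq_zero fun j hj => ?_
      exact h a (Finset.mem_cons_self a s) j (Finset.mem_cons_of_mem hj)
        (fun e => ha (e ▸ hj))
    linear_combination this

/-- In `H = ℤ[x_1,…,x_m]/R_{2n}` with `m = 2u+1`:
`∏_{r=1}^{u}(1-x_r)^{2n-1}(1+x_r)^2 · ∏_{s=u+1}^{m}(1-x_s)^{2n+1}
 = (1-(x_1+⋯+x_m))^{2n+1} · ∏_{r=1}^{u}((1+x_r)(1-x_r)^{-1})^2`,
where `(1-x_r)^{-1} = Σ_{k=0}^{2n} x_r^k`. -/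
theorem stmt_17 (n u : ℕ) (hn : 1 ≤ n)
    (x : Fin (2 * u + 1) → (MvPolynomial (Fin (2 * u + 1)) ℤ ⧸ csIdeal (2 * u + 1) n))
    (hx : ∀ j, x j = Ideal.Quotient.mk _ (X j)) :
    (∏ r ∈ Finset.univ.filter (fun i : Fin (2 * u + 1) => (i : ℕ) < u),
        (1 - x r) ^ (2 * n - 1) * (1 + x r) ^ 2) *
      (∏ s ∈ Finset.univ.filter (fun i : Fin (2 * u + 1) => ¬ (i : ℕ) < u),
        (1 - x s) ^ (2 * n + 1))
    = (1 - ∑ j, x j) ^ (2 * n + 1) *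
      ∏ r ∈ Finset.univ.filter (fun i : Fin (2 * u + 1) => (i : ℕ) < u),
        ((1 + x r) * ∑ k ∈ Finset.range (2 * n + 1), x r ^ k) ^ 2 := by
  classical
  have h0 : ∀ i j : Fin (2 * u + 1), i ≠ j → x i * x j = 0 := by
    intro i j hij
    rw [hx i, hx j, ← RingHom.map_mul, Ideal.Quotient.eq_zero_iff_mem]
    exact Ideal.subset_span (Or.inl (Or.inl ⟨i, j, hij, rfl⟩))
  have hnil : ∀ j : Fin (2 * u + 1), x j ^ (2 * n + 1) = 0 := by
    intro j
    rw [hx j, ← RingHom.map_pow, Ideal.Quotient.eq_zero_iff_mem]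
    exact Ideal.subset_span (Or.inr ⟨j, rfl⟩)
  have hgeo : ∀ j : Fin (2 * u + 1),
      (1 - x j) * ∑ k ∈ Finset.range (2 * n + 1), x j ^ k = 1 := by
    intro j
    have := geom_sum_mul (x j) (2 * n + 1)
    have h2 : (∑ k ∈ Finset.range (2 * n + 1), x j ^ k) * (x j - 1)
        = x j ^ (2 * n + 1) - 1 := this
    rw [hnil j] at h2
    linear_combination -h2
  have hprod : (1 - ∑ j, x j) = ∏ j, (1 - x j) := by
    rw [prod_one_sub_eq Finset.univ x (fun i _ j _ hij => h0 i j hij)]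
  rw [hprod, ← Finset.prod_pow,
    ← Finset.prod_filter_mul_prod_filter_not Finset.univ
      (fun i : Fin (2 * u + 1) => (i : ℕ) < u) (fun j => (1 - x j) ^ (2 * n + 1)),
    mul_assoc, mul_comm
      (∏ s ∈ Finset.univ.filter (fun i : Fin (2 * u + 1) => ¬ (i : ℕ) < u),
        (1 - x s) ^ (2 * n + 1)), ← mul_assoc, ← Finset.prod_mul_distrib]
  congr 1
  refine Finset.prod_congr rfl fun r _ => ?_
  have hpow : (1 - x r) ^ (2 * n + 1) = (1 - x r) ^ (2 * n - 1) * (1 - x r) ^ 2 := by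
    rw [← pow_add]; congr 1; omega
  set S := ∑ k ∈ Finset.range (2 * n + 1), x r ^ k with hS
  have e := hgeo r
  rw [← hS] at e
  rw [hpow]
  linear_combination (-(1 - x r) ^ (2 * n - 1) * (1 + x r) ^ 2 * ((1 - x r) * S + 1)) * e
end
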